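/- Let H be an intersecting r-partite hypergraph with τ(H) = r, minimum degree at least 2, h lines, maximum degree Δ ≥ 4, and |V(H)| = r² + ε vertices (ε ≥ 0). Then h² − (Δr + Δ/2 + 2r)h + 3r²Δ ≤ −3Δε. -/

import Mathlib

/-- A set of vertices `C` is a cover of the hypergraph `H` (a finite set of lines)
if every line contains a vertex of `C`. -/
def IsCover {α : Type*} (H : Finset (Finset α)) (C : Finset α) : Prop :=
  ∀ e ∈ H, ∃ v ∈ e, v ∈ C

/-- The covering number: the minimum size of a cover. -/
noncomputable def coverNumber {α : Type*} (H : Finset (Finset α)) : ℕ :=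
  sInf {n | ∃ C : Finset α, IsCover H C ∧ C.card = n}

/-- A matching is a set of pairwise disjoint lines of `H`. -/
def IsMatching {α : Type*} (H M : Finset (Finset α)) : Prop :=
  M ⊆ H ∧ ∀ e ∈ M, ∀ f ∈ M, e ≠ f → Disjoint e f

/-- The matching number: the maximum size of a matching. -/
noncomputable def matchingNumber {α : Type*} (H : Finset (Finset α)) : ℕ :=
  sSup {n | ∃ M : Finset (Finset α), IsMatching H M ∧ M.card = n}

/-- An `r`-partite hypergraph on vertex set `Fin r × V` (side `i` consists of the
vertices with first coordinate `i`): every line has exactly one vertex in each side. -/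
def Rpartite {r : ℕ} {V : Type*} (H : Finset (Finset (Fin r × V))) : Prop :=
  ∀ e ∈ H, ∀ i : Fin r, ∃! v : Fin r × V, v ∈ e ∧ v.1 = i

/-- `H` is intersecting: every two lines share at least one vertex. -/
def Intersecting {α : Type*} (H : Finset (Finset α)) : Prop :=
  ∀ e ∈ H, ∀ f ∈ H, ∃ v, v ∈ e ∧ v ∈ f

/-- `H` is linear intersecting: every two distinct lines meet in exactly one vertex. -/
def LinearIntersecting {α : Type*} (H : Finset (Finset α)) : Prop :=
  ∀ e ∈ H, ∀ f ∈ H, e ≠ f → ∃! v, v ∈ e ∧ v ∈ f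

/-- The vertices of `H` (i.e. the vertices of positive degree). -/
def vertexSet {α : Type*} [DecidableEq α] (H : Finset (Finset α)) : Finset α :=
  H.sup id

/-- The degree of a vertex: the number of lines containing it. -/
def degree {α : Type*} [DecidableEq α] (H : Finset (Finset α)) (v : α) : ℕ :=
  (H.filter (fun e => v ∈ e)).card

/-- The maximum degree of `H`. -/
def maxDegree {α : Type*} [DecidableEq α] (H : Finset (Finset α)) : ℕ :=
  (vertexSet H).sup (degree H)

/-- Side `i` of an `r`-partite hypergraph: the vertices of `H` with first coordinate `i`. -/
def side {r : ℕ} {V : Type*} [DecidableEq V] (H : Finset (Finset (Fin r × V))) (i : Fin r) :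
    Finset (Fin r × V) :=
  (vertexSet H).filter (fun v => v.1 = i)

set_option linter.unusedSectionVars false

section Aux
variable {r : ℕ} {V : Type*} [DecidableEq V] {H : Finset (Finset (Fin r × V))}

lemma cover_le {C : Finset (Fin r × V)} (hC : IsCover H C) : coverNumber H ≤ C.card :=
  Nat.sInf_le ⟨C, hC, rfl⟩

lemma line_card (hpart : Rpartite H) {e : Finset (Fin r × V)} (he : e ∈ H) : e.card = r := by
  have h := hpart e he
  have : e.card = (Finset.univ : Finset (Fin r)).card := by
    apply Finset.card_bij (fun (a : Fin r × V) _ => a.1)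
    · intro a _; exact Finset.mem_univ _
    · intro a ha b hb hab
      obtain ⟨v, hv, huniq⟩ := h a.1
      rw [huniq a ⟨ha, rfl⟩, huniq b ⟨hb, hab.symm⟩]
    · intro i _
      obtain ⟨v, ⟨hv, hvi⟩, _⟩ := h i
      exact ⟨v, hv, hvi⟩
  simpa using this

lemma subset_vertexSet {e : Finset (Fin r × V)} (he : e ∈ H) : e ⊆ vertexSet H :=
  Finset.le_sup (f := id) he

-- there are at least two distinct lines through any vertex of degree ≥ 2
lemma two_lines {v : Fin r × V} (hv : 2 ≤ degree H v) :
    ∃ e ∈ H, ∃ f ∈ H, v ∈ e ∧ v ∈ f ∧ e ≠ f := by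
  have hv' : 2 ≤ (H.filter (fun e => v ∈ e)).card := hv
  obtain ⟨e, he, f, hf, hef⟩ := Finset.one_lt_card.mp (by omega : 1 < (H.filter (fun e => v ∈ e)).card)
  simp only [Finset.mem_filter] at he hf
  exact ⟨e, he.1, f, hf.1, he.2, hf.2, hef⟩

lemma r_ge_three (hpart : Rpartite H) (hint : Intersecting H)
    (htau : coverNumber H = r)
    (hmindeg : ∀ v ∈ vertexSet H, 2 ≤ degree H v)
    (hΔ : 4 ≤ maxDegree H) : 3 ≤ r := by
  -- vertexSet is nonempty
  have hne : (vertexSet H).Nonempty := by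
    rcases Finset.eq_empty_or_nonempty (vertexSet H) with h | h
    · simp [maxDegree, h] at hΔ
    · exact h
  obtain ⟨v, hv⟩ := hne
  obtain ⟨e1, he1, e2, he2, hv1, hv2, hne12⟩ := two_lines (hmindeg v hv)
  -- r ≥ 1
  have hr1 : 1 ≤ r := (v.1).pos
  -- r ≠ 1
  have hr2 : r ≠ 1 := by
    intro h
    apply hne12
    obtain ⟨a, ha⟩ := Finset.card_eq_one.mp ((line_card hpart he1).trans h)
    obtain ⟨b, hb⟩ := Finset.card_eq_one.mp ((line_card hpart he2).trans h)
    rw [ha] at hv1; rw [hb] at hv2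
    rw [ha, hb, ← Finset.mem_singleton.mp hv1, ← Finset.mem_singleton.mp hv2]
  -- r ≠ 2
  have hr3 : r ≠ 2 := by
    intro h
    -- not every line contains v, else {v} is a cover of size 1 < 2
    have : ∃ f ∈ H, v ∉ f := by
      by_contra hcon
      push_neg at hcon
      have : coverNumber H ≤ 1 := by
        have := cover_le (C := {v}) (fun e he => ⟨v, hcon e he, Finset.mem_singleton_self v⟩)
        simpa using this
      omega
    obtain ⟨f, hf, hvf⟩ := this
    obtain ⟨w1, hw1e, hw1f⟩ := hint e1 he1 f hf
    obtain ⟨w2, hw2e, hw2f⟩ := hint e2 he2 f hf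
    have hw1v : w1 ≠ v := fun h' => hvf (h' ▸ hw1f)
    have hw2v : w2 ≠ v := fun h' => hvf (h' ▸ hw2f)
    -- w1.1 ≠ v.1 : in line e1, distinct vertices have distinct coordinates
    have hcoord : ∀ (e : Finset (Fin r × V)), e ∈ H → ∀ a ∈ e, ∀ b ∈ e, a.1 = b.1 → a = b := by
      intro e he a ha b hb hab
      obtain ⟨z, hz, huniq⟩ := hpart e he a.1
      rw [huniq a ⟨ha, rfl⟩, huniq b ⟨hb, hab.symm⟩]
    have h1 : w1.1 ≠ v.1 := fun hh => hw1v (hcoord e1 he1 w1 hw1e v hv1 hh)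
    have h2 : w2.1 ≠ v.1 := fun hh => hw2v (hcoord e2 he2 w2 hw2e v hv2 hh)
    -- in Fin 2 (r = 2), w1.1 = w2.1
    have h12 : w1.1 = w2.1 := by
      apply Fin.ext
      have a1 := w1.1.isLt; have a2 := w2.1.isLt; have a3 := v.1.isLt
      have b1 : w1.1.val ≠ v.1.val := fun hh => h1 (Fin.ext hh)
      have b2 : w2.1.val ≠ v.1.val := fun hh => h2 (Fin.ext hh)
      omega
    have : w1 = w2 := hcoord f hf w1 hw1f w2 hw2f h12
    -- e1 = {v, w1}, e2 = {v, w2} as card-2 sets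
    subst this
    apply hne12
    have hpair : ({v, w1} : Finset (Fin r × V)).card = 2 := Finset.card_pair hw1v.symm
    have c1 : ({v, w1} : Finset (Fin r × V)) = e1 :=
      Finset.eq_of_subset_of_card_le
        (Finset.insert_subset hv1 (Finset.singleton_subset_iff.mpr hw1e))
        (by rw [line_card hpart he1]; omega)
    have c2 : ({v, w1} : Finset (Fin r × V)) = e2 :=
      Finset.eq_of_subset_of_card_le
        (Finset.insert_subset hv2 (Finset.singleton_subset_iff.mpr hw2e))
        (by rw [line_card hpart he2]; omega)
    rw [← c1, ← c2]
  omega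


lemma no_two_deg2 (hpart : Rpartite H) (hint : Intersecting H) (htau : coverNumber H = r)
    (hr : 3 ≤ r) {e : Finset (Fin r × V)} (he : e ∈ H)
    {u w : Fin r × V} (hu : u ∈ e) (hw : w ∈ e) (huw : u ≠ w)
    (du : degree H u = 2) (dw : degree H w = 2) : False := by
  have hgetother : ∀ {x : Fin r × V}, x ∈ e → degree H x = 2 →
      ∃ f ∈ H, x ∈ f ∧ ∀ ℓ ∈ H, x ∈ ℓ → ℓ = e ∨ ℓ = f := by
    intro x hx dx
    have hmem : e ∈ H.filter (fun ℓ => x ∈ ℓ) := Finset.mem_filter.mpr ⟨he, hx⟩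
    have dx' : (H.filter (fun ℓ => x ∈ ℓ)).card = 2 := dx
    have hcarderase : ((H.filter (fun ℓ => x ∈ ℓ)).erase e).card = 1 := by
      rw [Finset.card_erase_of_mem hmem, dx']
    obtain ⟨f, hf⟩ := Finset.card_eq_one.mp hcarderase
    have hfmem : f ∈ (H.filter (fun ℓ => x ∈ ℓ)).erase e := hf ▸ Finset.mem_singleton_self f
    have hfH := Finset.mem_filter.mp (Finset.mem_erase.mp hfmem).2
    refine ⟨f, hfH.1, hfH.2, ?_⟩
    intro ℓ hℓ hxl
    by_cases hle : ℓ = e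
    · left; exact hle
    · right
      have : ℓ ∈ (H.filter (fun ℓ => x ∈ ℓ)).erase e :=
        Finset.mem_erase.mpr ⟨hle, Finset.mem_filter.mpr ⟨hℓ, hxl⟩⟩
      rw [hf] at this; exact Finset.mem_singleton.mp this
  obtain ⟨f, hfH, huf, hfonly⟩ := hgetother hu du
  obtain ⟨g, hgH, hwg, hgonly⟩ := hgetother hw dw
  obtain ⟨x, hxf, hxg⟩ := hint f hfH g hgH
  set C := insert x ((e.erase u).erase w) with hCdef
  have hwmem : w ∈ e.erase u := Finset.mem_erase.mpr ⟨Ne.symm huw, hw⟩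
  have hEcard : ((e.erase u).erase w).card = r - 2 := by
    rw [Finset.card_erase_of_mem hwmem, Finset.card_erase_of_mem hu, line_card hpart he]
    omega
  have hcover : IsCover H C := by
    intro ℓ hℓ
    obtain ⟨z, hze, hzl⟩ := hint e he ℓ hℓ
    by_cases hzu : z = u
    · subst hzu
      rcases hfonly ℓ hℓ hzl with rfl | rfl
      · obtain ⟨y, hy⟩ : ((ℓ.erase z).erase w).Nonempty := by
          rw [← Finset.card_pos, hEcard]; omega
        exact ⟨y, Finset.mem_of_mem_erase (Finset.mem_of_mem_erase hy),
          Finset.mem_insert_of_mem hy⟩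
      · exact ⟨x, hxf, Finset.mem_insert_self _ _⟩
    · by_cases hzw : z = w
      · subst hzw
        rcases hgonly ℓ hℓ hzl with rfl | rfl
        · obtain ⟨y, hy⟩ : ((ℓ.erase u).erase z).Nonempty := by
            rw [← Finset.card_pos, hEcard]; omega
          exact ⟨y, Finset.mem_of_mem_erase (Finset.mem_of_mem_erase hy),
            Finset.mem_insert_of_mem hy⟩
        · exact ⟨x, hxg, Finset.mem_insert_self _ _⟩
      · exact ⟨z, hzl, Finset.mem_insert_of_mem
          (Finset.mem_erase.mpr ⟨hzw, Finset.mem_erase.mpr ⟨hzu, hze⟩⟩)⟩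
  have hclecard : C.card ≤ r - 1 := by
    rw [hCdef]
    have := Finset.card_insert_le x ((e.erase u).erase w)
    omega
  have := cover_le hcover
  omega


lemma sum_degree_eq (S : Finset (Fin r × V)) :
    ∑ v ∈ S, degree H v = ∑ e ∈ H, (e.filter (fun v => v ∈ S)).card := by
  simp only [degree, Finset.card_filter]
  rw [Finset.sum_comm]
  apply Finset.sum_congr rfl
  intro e _
  rw [← Finset.card_filter, ← Finset.card_filter]
  congr 1
  ext v
  simp [and_comm]

lemma nat_le_mul_self (n : ℕ) : n ≤ n * n := by nlinarith

end Aux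

/-- The quadratic inequality: for an intersecting `r`-partite hypergraph with
`τ = r`, minimum degree at least `2`, `h` lines, maximum degree `Δ ≥ 4` and
`r² + ε` vertices, we have `h² - (Δr + Δ/2 + 2r)h + 3r²Δ ≤ -3Δε`. -/
theorem quadratic_in_h {r ε : ℕ} {V : Type*} [DecidableEq V]
    (H : Finset (Finset (Fin r × V)))
    (hpart : Rpartite H) (hint : Intersecting H) (htau : coverNumber H = r)
    (hmindeg : ∀ v ∈ vertexSet H, 2 ≤ degree H v)
    (hΔ : 4 ≤ maxDegree H)
    (hcard : (vertexSet H).card = r ^ 2 + ε) :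
    (H.card : ℝ)^2
        - ((maxDegree H : ℝ) * r + (maxDegree H : ℝ) / 2 + 2 * r) * (H.card : ℝ)
        + 3 * (r : ℝ)^2 * (maxDegree H : ℝ)
      ≤ -(3 * (maxDegree H : ℝ) * (ε : ℝ)) := by
  classical
  have hr : 3 ≤ r := r_ge_three hpart hint htau hmindeg hΔ
  set D := maxDegree H with hD
  set h := H.card with hh
  set Vs := vertexSet H with hVs
  have hdegle : ∀ v ∈ Vs, degree H v ≤ D := fun v hv => Finset.le_sup hv
  -- sum of all degrees is r * h
  have hsumV : ∑ v ∈ Vs, degree H v = r * h := by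
    rw [sum_degree_eq]
    rw [Finset.sum_congr rfl (fun e he => by
      rw [Finset.filter_true_of_mem (fun x hx => subset_vertexSet he hx), line_card hpart he])]
    simp [mul_comm, hh]
  -- degree-2 vertices
  set T := Vs.filter (fun v => degree H v = 2) with hT
  have hTline : ∀ e ∈ H, (e.filter (fun v => v ∈ T)).card ≤ 1 := by
    intro e he
    by_contra hcon
    push_neg at hcon
    obtain ⟨u, hu, w, hw, huw⟩ := Finset.one_lt_card.mp hcon
    rw [hT] at hu hw
    simp only [Finset.mem_filter] at hu hw
    exact no_two_deg2 hpart hint htau hr he hu.1 hw.1 huw hu.2.2 hw.2.2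
  have hTcard : 2 * T.card ≤ h := by
    have h1 := sum_degree_eq (H := H) T
    have h2 : ∑ v ∈ T, degree H v = 2 * T.card := by
      rw [Finset.sum_congr rfl (fun v hv => (Finset.mem_filter.mp hv).2)]
      simp [mul_comm, hT]
    calc 2 * T.card = ∑ e ∈ H, (e.filter (fun v => v ∈ T)).card := by rw [← h1, h2]
      _ ≤ ∑ _e ∈ H, 1 := Finset.sum_le_sum hTline
      _ = h := by simp [hh]
  -- pair counting
  have hpairsN : h * h - h ≤ ∑ v ∈ Vs, (degree H v * degree H v - degree H v) := by
    have hsub : H.offDiag ⊆ Vs.biUnion (fun v => (H.filter (fun e => v ∈ e)).offDiag) := by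
      intro p hp
      rw [Finset.mem_offDiag] at hp
      obtain ⟨z, hz1, hz2⟩ := hint p.1 hp.1 p.2 hp.2.1
      refine Finset.mem_biUnion.mpr ⟨z, subset_vertexSet hp.1 hz1, ?_⟩
      rw [Finset.mem_offDiag]
      exact ⟨Finset.mem_filter.mpr ⟨hp.1, hz1⟩, Finset.mem_filter.mpr ⟨hp.2.1, hz2⟩, hp.2.2⟩
    calc h * h - h = H.offDiag.card := (Finset.offDiag_card H).symm
      _ ≤ (Vs.biUnion (fun v => (H.filter (fun e => v ∈ e)).offDiag)).card :=
          Finset.card_le_card hsub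
      _ ≤ ∑ v ∈ Vs, ((H.filter (fun e => v ∈ e)).offDiag).card := Finset.card_biUnion_le
      _ = ∑ v ∈ Vs, (degree H v * degree H v - degree H v) := by
          exact Finset.sum_congr rfl (fun v _ => Finset.offDiag_card _)
  -- move to ℤ
  have hA : (h : ℤ) * h - h ≤ ∑ v ∈ Vs, ((degree H v : ℤ) * degree H v - degree H v) := by
    have c1 : ((h * h - h : ℕ) : ℤ) = (h : ℤ) * h - h := by
      rw [Nat.cast_sub (nat_le_mul_self h)]; push_cast; ring
    have c2 : ((∑ v ∈ Vs, (degree H v * degree H v - degree H v) : ℕ) : ℤ)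
        = ∑ v ∈ Vs, ((degree H v : ℤ) * degree H v - degree H v) := by
      rw [Nat.cast_sum]
      exact Finset.sum_congr rfl (fun v _ => by
        rw [Nat.cast_sub (nat_le_mul_self _)]; push_cast; ring)
    rw [← c1, ← c2]
    exact_mod_cast hpairsN
  have hB : ∑ v ∈ Vs, (degree H v : ℤ) = (r : ℤ) * h := by exact_mod_cast hsumV
  have hD4 : (4 : ℤ) ≤ (D : ℤ) := by exact_mod_cast hΔ
  have hC : ∀ v ∈ Vs, ((degree H v : ℤ)) * degree H v - degree H v
      ≤ ((D : ℤ) + 2) * degree H v - 3 * D + (if degree H v = 2 then (D : ℤ) - 2 else 0) := by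
    intro v hv
    have h2 : (2 : ℤ) ≤ (degree H v : ℤ) := by exact_mod_cast hmindeg v hv
    have hle : ((degree H v : ℤ)) ≤ D := by exact_mod_cast hdegle v hv
    by_cases hdv : degree H v = 2
    · rw [hdv]; simp; linarith
    · have h3 : (3 : ℤ) ≤ (degree H v : ℤ) := by
        have := hmindeg v hv
        exact_mod_cast (by omega : 3 ≤ degree H v)
      rw [if_neg hdv]
      nlinarith [mul_nonneg (by linarith : (0:ℤ) ≤ (degree H v : ℤ) - 3)
        (by linarith : (0:ℤ) ≤ (D : ℤ) - (degree H v : ℤ))]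
  have hsumC : ∑ v ∈ Vs, ((degree H v : ℤ) * degree H v - degree H v)
      ≤ ((D : ℤ) + 2) * ((r : ℤ) * h) - 3 * D * Vs.card + ((D : ℤ) - 2) * T.card := by
    calc ∑ v ∈ Vs, ((degree H v : ℤ) * degree H v - degree H v)
        ≤ ∑ v ∈ Vs, (((D : ℤ) + 2) * degree H v - 3 * D
            + (if degree H v = 2 then (D : ℤ) - 2 else 0)) := Finset.sum_le_sum hC
      _ = ((D : ℤ) + 2) * (∑ v ∈ Vs, (degree H v : ℤ)) - 3 * D * Vs.card
            + ∑ v ∈ Vs, (if degree H v = 2 then (D : ℤ) - 2 else 0) := by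
          rw [Finset.sum_add_distrib, Finset.sum_sub_distrib, ← Finset.mul_sum,
            Finset.sum_const, nsmul_eq_mul]
          ring
      _ = ((D : ℤ) + 2) * ((r : ℤ) * h) - 3 * D * Vs.card + ((D : ℤ) - 2) * T.card := by
          rw [hB, ← Finset.sum_filter, ← hT, Finset.sum_const, nsmul_eq_mul]
          ring
  have hT' : 2 * (T.card : ℤ) ≤ (h : ℤ) := by exact_mod_cast hTcard
  have hDVs : (D : ℤ) * Vs.card = (D : ℤ) * ((r:ℤ) ^ 2 + ε) := by
    rw [show ((Vs.card : ℤ)) = ((r:ℤ)^2 + ε) by exact_mod_cast hcard]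
  have hprod : ((D : ℤ) - 2) * (2 * T.card) ≤ ((D : ℤ) - 2) * h :=
    mul_le_mul_of_nonneg_left hT' (by linarith)
  have hkey : 2 * (h : ℤ) * h + 6 * D * ((r:ℤ)^2 + ε) ≤ (2 * D * r + D + 4 * r) * h := by
    nlinarith [hA, hsumC, hprod, hDVs]
  have hkR : 2 * (h : ℝ) * h + 6 * (D : ℝ) * ((r : ℝ)^2 + ε) ≤ (2 * (D:ℝ) * r + D + 4 * r) * h := by
    exact_mod_cast hkey
  nlinarith [hkR]
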